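/- arXiv:2004.08035 — 4 statements merged into one kernel-verified Lean document; each statement's English description precedes it below -/
import Mathlib

section
/- Maximal leakage upper bounds mutual information: for any joint distribution of discrete random variables X and Y with conditional distribution p(y|x), the mutual information I(X;Y) = Σ_{x,y} p(x)p(y|x) log( p(y|x) / Σ_{x'} p(x')p(y|x') ) is at most log Σ_y max_{x : p(x)>0} p(y|x). -/
open Finset

/-- Maximal leakage upper bounds mutual information:
`I(X;Y) ≤ log Σ_y max_{x : p(x)>0} p(y|x)`. -/
theorem mutualInformation_le_maximalLeakage {X Y : Type*} [Fintype X] [Fintype Y]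
    [Nonempty X] [Nonempty Y]
    (pX : X → ℝ) (hpX : ∀ x, 0 ≤ pX x) (hpX1 : ∑ x, pX x = 1)
    (W : X → Y → ℝ) (hW : ∀ x y, 0 ≤ W x y) (hWrow : ∀ x, ∑ y, W x y = 1)
    (hsupp : (univ.filter fun x : X => 0 < pX x).Nonempty) :
    ∑ x, ∑ y, pX x * W x y * Real.log (W x y / ∑ x', pX x' * W x' y) ≤
      Real.log (∑ y, (univ.filter fun x : X => 0 < pX x).sup' hsupp fun x => W x y) := by
  set s := univ.filter fun x : X => 0 < pX x with hs
  set M : Y → ℝ := fun y => s.sup' hsupp fun x => W x y with hM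
  set q : Y → ℝ := fun y => ∑ x', pX x' * W x' y with hq
  set S : ℝ := ∑ y, M y with hS
  obtain ⟨x0, hx0⟩ := hsupp
  have hMle : ∀ x ∈ s, ∀ y, W x y ≤ M y := fun x hx y => Finset.le_sup' (fun x => W x y) hx
  have hM0 : ∀ y, 0 ≤ M y := fun y => le_trans (hW x0 y) (hMle x0 hx0 y)
  have hq0 : ∀ y, 0 ≤ q y := fun y =>
    Finset.sum_nonneg fun x _ => mul_nonneg (hpX x) (hW x y)
  have hq1 : ∑ y, q y = 1 := by
    rw [Finset.sum_comm]
    simp_rw [← Finset.mul_sum, hWrow, mul_one, hpX1]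
  have hS1 : (1 : ℝ) ≤ S := by
    calc (1 : ℝ) = ∑ y, W x0 y := (hWrow x0).symm
    _ ≤ ∑ y, M y := Finset.sum_le_sum fun y _ => hMle x0 hx0 y
  have hSpos : 0 < S := lt_of_lt_of_le one_pos hS1
  -- Step 1: replace W x y by M y inside the log
  have step1 : ∑ x, ∑ y, pX x * W x y * Real.log (W x y / q y)
      ≤ ∑ y, q y * Real.log (M y / q y) := by
    rw [Finset.sum_comm]
    refine Finset.sum_le_sum fun y _ => ?_
    have : ∑ x, pX x * W x y * Real.log (M y / q y)
        = q y * Real.log (M y / q y) := by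
      rw [← Finset.sum_mul]
    rw [← this]
    refine Finset.sum_le_sum fun x _ => ?_
    rcases eq_or_lt_of_le (hpX x) with h1 | h1
    · simp [← h1]
    rcases eq_or_lt_of_le (hW x y) with h2 | h2
    · simp [← h2]
    have hxs : x ∈ s := by simp [hs, h1]
    have hqpos : 0 < q y := by
      have : 0 < pX x * W x y := mul_pos h1 h2
      refine lt_of_lt_of_le this ?_
      exact Finset.single_le_sum (fun x' _ => mul_nonneg (hpX x') (hW x' y))
        (Finset.mem_univ x)
    have := Real.log_le_log (div_pos h2 hqpos)
      (div_le_div_of_nonneg_right (hMle x hxs y) hqpos.le)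
    exact mul_le_mul_of_nonneg_left this (mul_pos h1 h2).le
  refine le_trans step1 ?_
  -- Step 2: Gibbs
  have step2 : ∀ y, q y * Real.log (M y / q y) ≤ M y / S - q y + q y * Real.log S := by
    intro y
    rcases eq_or_lt_of_le (hq0 y) with h1 | h1
    · simp only [← h1, zero_mul, sub_zero, add_zero]
      exact div_nonneg (hM0 y) hSpos.le
    · have hqpos := h1
      have hMpos : 0 < M y := by
        obtain ⟨x, -, hx⟩ := Finset.exists_lt_of_sum_lt
          (by simpa using hqpos : ∑ x : X, (0:ℝ) < ∑ x, pX x * W x y)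
        have hpx : 0 < pX x := by
          by_contra h
          push_neg at h
          have : pX x = 0 := le_antisymm h (hpX x)
          simp [this] at hx
        have hwx : 0 < W x y := by
          rcases eq_or_lt_of_le (hW x y) with h2 | h2
          · simp [← h2] at hx
          · exact h2
        exact lt_of_lt_of_le hwx (hMle x (by simp [hs, hpx]) y)
      have key : Real.log (M y / S / q y) ≤ M y / S / q y - 1 :=
        Real.log_le_sub_one_of_pos (div_pos (div_pos hMpos hSpos) hqpos)
      have expand : Real.log (M y / q y) = Real.log (M y / S / q y) + Real.log S := by
        rw [← Real.log_mul (by positivity) (ne_of_gt hSpos)]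
        congr 1
        field_simp
      rw [expand, mul_add]
      have : q y * Real.log (M y / S / q y) ≤ M y / S - q y := by
        calc q y * Real.log (M y / S / q y) ≤ q y * (M y / S / q y - 1) :=
              mul_le_mul_of_nonneg_left key (le_of_lt hqpos)
          _ = M y / S - q y := by field_simp
      linarith
  calc ∑ y, q y * Real.log (M y / q y)
      ≤ ∑ y, (M y / S - q y + q y * Real.log S) := Finset.sum_le_sum fun y _ => step2 y
    _ = (∑ y, M y) / S - (∑ y, q y) + (∑ y, q y) * Real.log S := by
        rw [Finset.sum_add_distrib, Finset.sum_sub_distrib, ← Finset.sum_div,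
          ← Finset.sum_mul]
    _ = Real.log S := by
        rw [hq1, ← hS, div_self (ne_of_gt hSpos)]
        ring
end

section
/- For any Markov chain U − X − Y with finite alphabets, the maximum probability of correctly guessing U from Y satisfies max_{ũ} Pr(U = ũ(Y)) ≤ (max_u Pr(U = u)) · Σ_y max_{x : p(x)>0} p(y|x). Consequently the multiplicative gain leakage is upper bounded by maximal leakage. -/
open Finset

/-- For a Markov chain `U − X − Y` (joint pmf `q` on `U × X`, channel `W : X → Y`),
the maximum probability of correctly guessing `U` from `Y` is at most
`(max_u Pr(U=u)) · Σ_y max_{x : p(x)>0} p(y|x)`; hence the multiplicative gain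
leakage is upper bounded by maximal leakage. -/
theorem multLeakage_le_maximalLeakage
    {U X Y : Type*} [Fintype U] [Fintype X] [Fintype Y]
    [Nonempty U] [Nonempty X] [Nonempty Y] [DecidableEq U] [DecidableEq Y]
    (q : U → X → ℝ) (hq : ∀ u x, 0 ≤ q u x) (hq1 : ∑ u, ∑ x, q u x = 1)
    (W : X → Y → ℝ) (hW : ∀ x y, 0 ≤ W x y) (hWrow : ∀ x, ∑ y, W x y = 1)
    (hsupp : (univ.filter fun x : X => 0 < ∑ u, q u x).Nonempty) :
    (univ.sup' univ_nonempty fun guess : Y → U =>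
        ∑ y, ∑ x, q (guess y) x * W x y) ≤
      (univ.sup' univ_nonempty fun u : U => ∑ x, q u x) *
        ∑ y, (univ.filter fun x : X => 0 < ∑ u, q u x).sup' hsupp fun x => W x y := by
  set S := univ.filter fun x : X => 0 < ∑ u, q u x with hS
  set M : Y → ℝ := fun y => S.sup' hsupp fun x => W x y with hM
  set P : ℝ := univ.sup' univ_nonempty fun u : U => ∑ x, q u x with hP
  have hPnn : ∀ u : U, ∑ x, q u x ≤ P := fun u => le_sup' (fun u : U => ∑ x, q u x) (mem_univ u)
  have hP0 : 0 ≤ P := by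
    obtain ⟨u⟩ := ‹Nonempty U›
    exact le_trans (Finset.sum_nonneg fun x _ => hq u x) (hPnn u)
  have hMnn : ∀ y, 0 ≤ M y := by
    intro y
    obtain ⟨x, hx⟩ := hsupp
    exact le_trans (hW x y) (le_sup' (fun x => W x y) hx)
  apply sup'_le
  intro g _
  calc ∑ y, ∑ x, q (g y) x * W x y
      ≤ ∑ y, P * M y := by
        apply Finset.sum_le_sum
        intro y _
        have : ∑ x, q (g y) x * W x y ≤ (∑ x, q (g y) x) * M y := by
          rw [Finset.sum_mul]
          apply Finset.sum_le_sum
          intro x _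
          by_cases hx : 0 < ∑ u, q u x
          · exact mul_le_mul_of_nonneg_left (le_sup' (fun x => W x y)
              (by simp [hS, hx])) (hq _ x)
          · have hz : q (g y) x = 0 := by
              have h1 : ∑ u, q u x = 0 :=
                le_antisymm (not_lt.mp hx) (Finset.sum_nonneg fun u _ => hq u x)
              have := (Finset.sum_eq_zero_iff_of_nonneg fun u _ => hq u x).mp h1
              exact this (g y) (mem_univ _)
            simp [hz]
        exact le_trans this (mul_le_mul_of_nonneg_right (hPnn _) (hMnn y))
    _ = P * ∑ y, M y := by rw [Finset.mul_sum]
end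

section
/- Adding independent noise cannot increase maximal leakage: if Y is generated from X by stochastic matrix P and Z is generated from Y by stochastic matrix Q independently of X given Y, then the exponentiated maximal leakage of the composed channel QP (from X to Z) is at most that of P, i.e., Σ_z max_x (Σ_y p_{xy} q_{yz}) ≤ Σ_y max_x p_{xy}. -/
open Finset

/-- Post-processing by independent noise cannot increase maximal leakage:
`Σ_z max_x Σ_y p_{xy} q_{yz} ≤ Σ_y max_x p_{xy}`. -/
theorem expMaxLeakage_postprocessing {X Y Z : Type*}
    [Fintype X] [Fintype Y] [Fintype Z] [Nonempty X] [Nonempty Y] [Nonempty Z]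
    (P : X → Y → ℝ) (hPnn : ∀ x y, 0 ≤ P x y) (hProw : ∀ x, ∑ y, P x y = 1)
    (Q : Y → Z → ℝ) (hQnn : ∀ y z, 0 ≤ Q y z) (hQrow : ∀ y, ∑ z, Q y z = 1) :
    ∑ z, univ.sup' univ_nonempty (fun x => ∑ y, P x y * Q y z) ≤
      ∑ y, univ.sup' univ_nonempty (fun x => P x y) := by
  have key : ∀ z, univ.sup' univ_nonempty (fun x => ∑ y, P x y * Q y z) ≤
      ∑ y, univ.sup' univ_nonempty (fun x => P x y) * Q y z := by
    intro z
    apply Finset.sup'_le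
    intro x _
    apply Finset.sum_le_sum
    intro y _
    exact mul_le_mul_of_nonneg_right (Finset.le_sup' (fun x => P x y) (mem_univ x)) (hQnn y z)
  calc ∑ z, univ.sup' univ_nonempty (fun x => ∑ y, P x y * Q y z)
      ≤ ∑ z, ∑ y, univ.sup' univ_nonempty (fun x => P x y) * Q y z :=
        Finset.sum_le_sum fun z _ => key z
    _ = ∑ y, univ.sup' univ_nonempty (fun x => P x y) * ∑ z, Q y z := by
        rw [Finset.sum_comm]; simp [Finset.mul_sum]
    _ = ∑ y, univ.sup' univ_nonempty (fun x => P x y) := by simp [hQrow]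
end

section
/- Water-filling preserves column maxima and does not increase exp-leak: given a stochastic M×N matrix P with column-maximum vector p_i = max_x p_{x,y_i}, the water-filled matrix P' constructed by setting, for each row x and columns left to right, p'_{x,y_i} = min{p_i, 1 − Σ_{j<i} p'_{x,y_j}} (when c(x,y_i) < ∞, else 0), is itself a stochastic matrix with Σ_y max_x p'_{xy} ≤ Σ_y max_x p_{xy}, provided the cost function is staircase nondecreasing. -/
open Finset
open scoped ENNReal

/-- Partial row sums of the water-filled matrix: `wfSum P c x n` is the total mass
placed in the first `n` columns of row `x` by the water-filling procedure, which fills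
each row left to right up to the column maxima of `P`, skipping infinite-cost entries. -/
noncomputable def wfSum {M N : ℕ} (P : Fin (M + 1) → Fin (N + 1) → ℝ)
    (c : Fin (M + 1) → Fin (N + 1) → ℝ≥0∞) (x : Fin (M + 1)) : ℕ → ℝ
  | 0 => 0
  | n + 1 =>
    if h : n < N + 1 then
      if c x ⟨n, h⟩ = ⊤ then wfSum P c x n
      else wfSum P c x n +
        min (univ.sup' univ_nonempty fun x' => P x' ⟨n, h⟩) (1 - wfSum P c x n)
    else wfSum P c x n

/-- The water-filled matrix `P'` associated to `P` and the cost function `c`. -/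
noncomputable def waterfill {M N : ℕ} (P : Fin (M + 1) → Fin (N + 1) → ℝ)
    (c : Fin (M + 1) → Fin (N + 1) → ℝ≥0∞) (x : Fin (M + 1)) (i : Fin (N + 1)) : ℝ :=
  wfSum P c x (i.val + 1) - wfSum P c x i.val

variable {M N : ℕ} (P : Fin (M + 1) → Fin (N + 1) → ℝ)
    (c : Fin (M + 1) → Fin (N + 1) → ℝ≥0∞) (x : Fin (M + 1))

lemma wfSum_succ (i : Fin (N + 1)) :
    wfSum P c x (i.val + 1) =
      if c x i = ⊤ then wfSum P c x i.val
      else wfSum P c x i.val +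
        min (univ.sup' univ_nonempty fun x' => P x' i) (1 - wfSum P c x i.val) := by
  rw [wfSum, dif_pos i.isLt]

lemma q_nonneg (hPnn : ∀ x y, 0 ≤ P x y) (i : Fin (N + 1)) :
    (0:ℝ) ≤ univ.sup' univ_nonempty fun x' => P x' i :=
  le_trans (hPnn (0 : Fin (M+1)) i) (le_sup' (fun x' => P x' i) (mem_univ (0 : Fin (M+1))))

lemma wfSum_step (hPnn : ∀ x y, 0 ≤ P x y) (n : ℕ) (h1 : wfSum P c x n ≤ 1) :
    wfSum P c x n ≤ wfSum P c x (n + 1) ∧ wfSum P c x (n + 1) ≤ 1 := by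
  rw [wfSum]
  split_ifs with hn hc
  · exact ⟨le_rfl, h1⟩
  · have hq := q_nonneg P hPnn ⟨n, hn⟩
    have hmin : (0:ℝ) ≤ min (univ.sup' univ_nonempty fun x' => P x' ⟨n, hn⟩)
        (1 - wfSum P c x n) := le_min hq (by linarith)
    have h2 := min_le_right (univ.sup' univ_nonempty fun x' => P x' ⟨n, hn⟩)
        (1 - wfSum P c x n)
    exact ⟨by linarith, by linarith⟩
  · exact ⟨le_rfl, h1⟩

lemma wfSum_le_one (hPnn : ∀ x y, 0 ≤ P x y) : ∀ n, wfSum P c x n ≤ 1 := by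
  intro n
  induction n with
  | zero => rw [wfSum]; norm_num
  | succ k ih => exact (wfSum_step P c x hPnn k ih).2

lemma wfSum_mono (hPnn : ∀ x y, 0 ≤ P x y) : Monotone (wfSum P c x) := by
  apply monotone_nat_of_le_succ
  intro n
  exact (wfSum_step P c x hPnn n (wfSum_le_one P c x hPnn n)).1

lemma waterfill_nonneg' (hPnn : ∀ x y, 0 ≤ P x y) (i : Fin (N + 1)) :
    0 ≤ waterfill P c x i :=
  sub_nonneg.2 (wfSum_mono P c x hPnn (Nat.le_succ _))

lemma waterfill_le_q (hPnn : ∀ x y, 0 ≤ P x y) (i : Fin (N + 1)) :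
    waterfill P c x i ≤ univ.sup' univ_nonempty fun x' => P x' i := by
  unfold waterfill
  rw [wfSum_succ]
  split_ifs with hc
  · simpa using q_nonneg P hPnn i
  · have := min_le_left (univ.sup' univ_nonempty fun x' => P x' i)
      (1 - wfSum P c x i.val)
    linarith

lemma waterfill_row_sum (x : Fin (M + 1)) :
    ∑ i, waterfill P c x i = wfSum P c x (N + 1) := by
  have : ∑ i : Fin (N + 1), waterfill P c x i
      = ∑ i ∈ range (N + 1), (wfSum P c x (i + 1) - wfSum P c x i) :=
    Fin.sum_univ_eq_sum_range (fun i => wfSum P c x (i + 1) - wfSum P c x i) (N + 1)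
  rw [this, Finset.sum_range_sub]
  simp [wfSum]


/-- Water-filling yields a stochastic matrix and does not increase the exponentiated
maximal leakage, provided the cost function is staircase nondecreasing and `P` is a
stochastic matrix of finite total cost. -/
theorem waterfill_stochastic_and_leakage_le {M N : ℕ}
    (P : Fin (M + 1) → Fin (N + 1) → ℝ)
    (c : Fin (M + 1) → Fin (N + 1) → ℝ≥0∞)
    (hPnn : ∀ x y, 0 ≤ P x y) (hProw : ∀ x, ∑ y, P x y = 1)
    (hfin : ∀ x y, c x y = ⊤ → P x y = 0)
    (hstair₁ : ∀ i j : Fin (M + 1), i < j → ∀ y, c i y = ⊤ → c j y = ⊤)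
    (hstair₂ : ∀ x, ∀ i j : Fin (N + 1), i < j → c x i ≠ ⊤ →
      c x i ≤ c x j ∧ c x j ≠ ⊤) :
    (∀ x y, 0 ≤ waterfill P c x y) ∧
    (∀ x, ∑ y, waterfill P c x y = 1) ∧
    ∑ y, univ.sup' univ_nonempty (fun x => waterfill P c x y) ≤
      ∑ y, univ.sup' univ_nonempty (fun x => P x y) := by
  have hnn : ∀ x y, 0 ≤ waterfill P c x y :=
    fun x y => waterfill_nonneg' P c x hPnn y
  have hrow : ∀ x, ∑ y, waterfill P c x y = 1 := by
    intro x
    rw [waterfill_row_sum]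
    by_contra hne
    have hlt : wfSum P c x (N + 1) < 1 :=
      lt_of_le_of_ne (wfSum_le_one P c x hPnn _) hne
    have hge : ∀ i : Fin (N + 1), P x i ≤ waterfill P c x i := by
      intro i
      by_cases hc : c x i = ⊤
      · rw [hfin x i hc]; exact hnn x i
      · have hw : waterfill P c x i =
            min (univ.sup' univ_nonempty fun x' => P x' i) (1 - wfSum P c x i.val) := by
          unfold waterfill; rw [wfSum_succ, if_neg hc]; ring
        rcases le_or_gt (univ.sup' univ_nonempty fun x' => P x' i)
            (1 - wfSum P c x i.val) with h | h
        · rw [hw, min_eq_left h]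
          exact le_sup' (fun x' => P x' i) (mem_univ x)
        · exfalso
          have h1 : wfSum P c x (i.val + 1) = 1 := by
            rw [wfSum_succ, if_neg hc, min_eq_right h.le]; ring
          have h2 : wfSum P c x (i.val + 1) ≤ wfSum P c x (N + 1) :=
            wfSum_mono P c x hPnn (Nat.succ_le_of_lt i.isLt)
          linarith
    have hs : (1:ℝ) ≤ ∑ i, waterfill P c x i := by
      rw [← hProw x]; exact Finset.sum_le_sum fun i _ => hge i
    rw [waterfill_row_sum] at hs; linarith
  refine ⟨hnn, hrow, ?_⟩
  refine Finset.sum_le_sum fun y _ => ?_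
  exact sup'_le _ _ fun x _ => waterfill_le_q P c x hPnn y
end
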